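/- Let (Y, ℝ) be a free dynamical system on a compact metric space Y (so y + r = y with r ∈ ℝ implies r = 0), let w ∈ Y, and let α, β > 0. Then there exist an open neighborhood W of w and a finite open cover V of Y with ord(V) ≤ 3 such that V is (α, β)-refined at W. -/

import Mathlib

open Set Metric

lemma aux_unif {Y : Type*} [MetricSpace Y] [CompactSpace Y] (Φ : ℝ × Y → Y)
    (hcont : Continuous Φ) (a b : ℝ) {η : ℝ} (hη : 0 < η) :
    ∃ ζ > 0, ∀ r ∈ Set.Icc a b, ∀ y y' : Y, dist y y' < ζ →
      dist (Φ (r, y)) (Φ (r, y')) < η := by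
  have hK : IsCompact (Set.Icc a b ×ˢ (Set.univ : Set Y)) :=
    isCompact_Icc.prod isCompact_univ
  have huc := hK.uniformContinuousOn_of_continuous hcont.continuousOn
  rw [Metric.uniformContinuousOn_iff] at huc
  obtain ⟨ζ, hζ, h⟩ := huc η hη
  refine ⟨ζ, hζ, fun r hr y y' hd => ?_⟩
  have := h (r, y) ⟨hr, trivial⟩ (r, y') ⟨hr, trivial⟩ ?_
  · exact this
  · simp [Prod.dist_eq, hd, hζ]

lemma aux_sep {Y : Type*} [MetricSpace Y] (c : ℝ → Y) (hc : Continuous c)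
    (hinj : Function.Injective c) (a b L : ℝ) (hL : 0 < L) :
    ∃ G > 0, ∀ s ∈ Set.Icc a b, ∀ t ∈ Set.Icc a b, L ≤ |s - t| →
      G ≤ dist (c s) (c t) := by
  set K : Set (ℝ × ℝ) := (Set.Icc a b ×ˢ Set.Icc a b) ∩ {p | L ≤ |p.1 - p.2|} with hKdef
  have hKc : IsCompact K := by
    apply (isCompact_Icc.prod isCompact_Icc).inter_right
    exact isClosed_le continuous_const ((continuous_fst.sub continuous_snd).abs)
  rcases K.eq_empty_or_nonempty with hKe | hKne
  · refine ⟨1, one_pos, fun s hs t ht hst => ?_⟩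
    exact absurd (by exact ⟨⟨hs, ht⟩, hst⟩ : (s, t) ∈ K) (by simp [hKe])
  · obtain ⟨p, hpK, hpmin⟩ := hKc.exists_isMinOn hKne
      ((hc.comp continuous_fst).dist (hc.comp continuous_snd)).continuousOn
    refine ⟨dist (c p.1) (c p.2), ?_, fun s hs t ht hst => ?_⟩
    · rw [gt_iff_lt, dist_pos]
      intro h
      have heq : p.1 = p.2 := hinj h
      have h2 : L ≤ |p.1 - p.2| := hpK.2
      rw [heq, sub_self, abs_zero] at h2
      linarith
    · exact hpmin (show (s, t) ∈ K from ⟨⟨hs, ht⟩, hst⟩)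

lemma aux_cunif {Y : Type*} [MetricSpace Y] (c : ℝ → Y) (hc : Continuous c)
    (a b : ℝ) {θ : ℝ} (hθ : 0 < θ) :
    ∃ L > 0, ∀ s ∈ Set.Icc a b, ∀ t ∈ Set.Icc a b, |s - t| ≤ L →
      dist (c s) (c t) < θ := by
  have huc := (isCompact_Icc (a := a) (b := b)).uniformContinuousOn_of_continuous
    hc.continuousOn
  rw [Metric.uniformContinuousOn_iff] at huc
  obtain ⟨δ, hδ, h⟩ := huc θ hθ
  refine ⟨δ/2, by linarith, fun s hs t ht hst => ?_⟩
  exact h s hs t ht (by rw [Real.dist_eq]; linarith)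



/-- The order of a finite family of sets: the maximal number of its members
having a common point. -/
noncomputable def ordCover {Y : Type*} (A : Finset (Set Y)) : ℕ :=
  sSup {n : ℕ | ∃ y : Y, ∃ B ⊆ A, B.card = n ∧ ∀ s ∈ B, y ∈ s}

/-- A collection `V` of subsets of `Y` is `(α, β)`-refined at `W` (with respect to
the flow `ρ`) if: (1) no element of `V + r` meets the closures of both `W + r₁` and
`W + r₂` for `r, r₁, r₂ ∈ [−β, β]` with `|r₁ − r₂| ≥ 1`; and (2) whenever
`V + [−β, β]` meets the closure of `W + [−β, β]` for `V ∈ V`, then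
`diam (V + r) < α` for all `r ∈ [−β, β]`. -/
def RefinedAt {Y : Type*} [MetricSpace Y] (ρ : ℝ → Y → Y)
    (V : Finset (Set Y)) (W : Set Y) (α β : ℝ) : Prop :=
  (∀ s ∈ V, ∀ r ∈ Set.Icc (-β) β, ∀ r₁ ∈ Set.Icc (-β) β, ∀ r₂ ∈ Set.Icc (-β) β,
    1 ≤ |r₁ - r₂| →
    ¬((ρ r '' s ∩ closure (ρ r₁ '' W)).Nonempty ∧
      (ρ r '' s ∩ closure (ρ r₂ '' W)).Nonempty)) ∧
  (∀ s ∈ V,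
    ((⋃ r ∈ Set.Icc (-β) β, ρ r '' s) ∩
      closure (⋃ r ∈ Set.Icc (-β) β, ρ r '' W)).Nonempty →
    ∀ r ∈ Set.Icc (-β) β, Metric.diam (ρ r '' s) < α)

set_option maxHeartbeats 1000000 in
theorem stmt_15 {Y : Type*} [MetricSpace Y] [CompactSpace Y]
    (ρ : ℝ → Y → Y)
    -- ρ is a continuous flow of ℝ on Y
    (hcont : Continuous fun p : ℝ × Y => ρ p.1 p.2)
    (hzero : ∀ y, ρ 0 y = y)
    (hadd : ∀ r s : ℝ, ∀ y, ρ (r + s) y = ρ r (ρ s y))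
    -- the flow is free
    (hfree : ∀ r : ℝ, ∀ y : Y, ρ r y = y → r = 0)
    (w : Y) (α β : ℝ) (hα : 0 < α) (hβ : 0 < β) :
    ∃ W : Set Y, ∃ V : Finset (Set Y),
      IsOpen W ∧ w ∈ W ∧
      (∀ s ∈ V, IsOpen s) ∧ (∀ y : Y, ∃ s ∈ V, y ∈ s) ∧
      ordCover V ≤ 3 ∧ RefinedAt ρ V W α β := by
  classical
  have hρc : ∀ r : ℝ, Continuous (ρ r) := fun r =>
    hcont.comp (continuous_const.prodMk continuous_id)
  set c : ℝ → Y := fun r => ρ r w with hc_def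
  have hc_cont : Continuous c := hcont.comp (continuous_id.prodMk continuous_const)
  have hinv : ∀ (r : ℝ) (x : Y), ρ (-r) (ρ r x) = x := by
    intro r x; rw [← hadd]; simp [hzero]
  have hinj : Function.Injective c := by
    intro s t h
    have h1 : ρ (s - t) (ρ t w) = ρ t w := by
      rw [← hadd]
      have hst : s - t + t = s := by ring
      rw [hst]; exact h
    have h2 := hfree _ _ h1
    linarith [h2]
  obtain ⟨G₁, hG₁pos, hG₁⟩ := aux_sep c hc_cont hinj (-(2*β)) (2*β) 1 one_pos
  set θ := min α G₁ with hθdef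
  have hθpos : 0 < θ := lt_min hα hG₁pos
  have hθα : θ ≤ α := min_le_left _ _
  have hθG : θ ≤ G₁ := min_le_right _ _
  obtain ⟨ζ₁, hζ₁pos, hζ₁⟩ := aux_unif (fun p : ℝ × Y => ρ p.1 p.2) hcont (-(2*β)) (2*β)
    (show (0:ℝ) < θ/8 by linarith)
  obtain ⟨L, hLpos, hL⟩ := aux_cunif c hc_cont (-(2*β)) (2*β) hζ₁pos
  set N := max 1 ⌈(4*β)/L⌉₊ with hNdef
  have hN1 : 1 ≤ N := le_max_left _ _
  have hNR : (0:ℝ) < (N:ℝ) := by exact_mod_cast hN1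
  set step := 4*β/(N:ℝ) with hstepdef
  have hstep_pos : 0 < step := by positivity
  have hNstep : (N:ℝ) * step = 4*β := by
    rw [hstepdef]; field_simp
  have hstepL : step ≤ L := by
    have h1 : (4*β)/L ≤ (⌈(4*β)/L⌉₊:ℝ) := Nat.le_ceil _
    have h2 : ((⌈(4*β)/L⌉₊:ℕ):ℝ) ≤ (N:ℝ) := by exact_mod_cast le_max_right 1 ⌈(4*β)/L⌉₊
    rw [hstepdef, div_le_iff₀ hNR]
    rw [div_le_iff₀ hLpos] at h1
    nlinarith
  set tt : ℕ → ℝ := fun i => -(2*β) + i * step with httdef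
  set K : ℕ → Set ℝ := fun i => Set.Icc (tt i) (tt (i+1)) with hKdef
  have hKI2 : ∀ i, i < N → K i ⊆ Set.Icc (-(2*β)) (2*β) := by
    intro i hi u hu
    have hi1 : ((i:ℝ)+1) ≤ (N:ℝ) := by exact_mod_cast hi
    obtain ⟨h1, h2⟩ := hu
    simp only [httdef] at h1 h2
    constructor
    · have : (0:ℝ) ≤ (i:ℝ) * step := by positivity
      linarith
    · push_cast at h2
      nlinarith
  obtain ⟨G₂, hG₂pos, hG₂⟩ := aux_sep c hc_cont hinj (-(2*β)) (2*β) step hstep_pos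
  set rad := min (ζ₁/2) (G₂/4) with hraddef
  have hradpos : 0 < rad := lt_min (by linarith) (by linarith)
  have hradζ : rad ≤ ζ₁/2 := min_le_left _ _
  have hradG : rad ≤ G₂/4 := min_le_right _ _
  set U : ℕ → Set Y := fun i => ⋃ s ∈ K i, Metric.ball (c s) rad with hUdef
  set A := c '' Set.Icc (-(2*β)) (2*β) with hAdef
  have hAcomp : IsCompact A := isCompact_Icc.image hc_cont
  have hAne : A.Nonempty := ⟨c 0, Set.mem_image_of_mem c (by constructor <;> linarith)⟩
  set Uinf := {y : Y | rad/2 < Metric.infDist y A} with hUinfdef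
  set κ := min (θ/8) (rad/4) with hκdef
  have hκpos : 0 < κ := lt_min (by linarith) (by linarith)
  have hκθ : κ ≤ θ/8 := min_le_left _ _
  have hκr : κ ≤ rad/4 := min_le_right _ _
  obtain ⟨ζ₂, hζ₂pos, hζ₂⟩ := aux_unif (fun p : ℝ × Y => ρ p.1 p.2) hcont (-(2*β)) (2*β) hκpos
  set δ := ζ₂/2 with hδdef
  have hδpos : 0 < δ := by rw [hδdef]; linarith
  set W := Metric.ball w δ with hWdef
  have hIβ : Set.Icc (-β) β ⊆ Set.Icc (-(2*β)) (2*β) :=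
    Set.Icc_subset_Icc (by linarith) (by linarith)
  have hflow : ∀ u ∈ Set.Icc (-(2*β)) (2*β), ∀ y : Y, dist y w ≤ δ →
      dist (ρ u y) (c u) < κ := by
    intro u hu y hy
    exact hζ₂ u hu y w (by rw [hδdef] at hy; linarith)
  -- tube diameter under the flow
  have htube : ∀ i, i < N → ∀ r ∈ Set.Icc (-(2*β)) (2*β), ∀ x ∈ U i, ∀ y ∈ U i,
      dist (ρ r x) (ρ r y) ≤ 3*(θ/8) := by
    intro i hi r hr x hx y hy
    simp only [hUdef, Set.mem_iUnion, Metric.mem_ball, exists_prop] at hx hy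
    obtain ⟨s, hsK, hxs⟩ := hx
    obtain ⟨s', hs'K, hys'⟩ := hy
    have hs2 := hKI2 i hi hsK
    have hs'2 := hKI2 i hi hs'K
    have hss' : |s - s'| ≤ L := by
      obtain ⟨a1, a2⟩ := hsK
      obtain ⟨b1, b2⟩ := hs'K
      simp only [httdef] at a1 a2 b1 b2
      rw [abs_le]
      push_cast at a1 a2 b1 b2
      constructor <;> nlinarith
    have hcc : dist (c s) (c s') < ζ₁ := hL s hs2 s' hs'2 hss'
    have e1 : dist (ρ r x) (ρ r (c s)) < θ/8 := hζ₁ r hr x (c s) (by linarith)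
    have e2 : dist (ρ r (c s)) (ρ r (c s')) < θ/8 := hζ₁ r hr (c s) (c s') hcc
    have e3 : dist (ρ r (c s')) (ρ r y) < θ/8 := by
      apply hζ₁ r hr (c s') y
      rw [dist_comm] at hys'; linarith
    have := dist_triangle4 (ρ r x) (ρ r (c s)) (ρ r (c s')) (ρ r y)
    linarith
  -- closures of flowed W
  have hclW : ∀ r' : ℝ, closure (ρ r' '' W) ⊆ ρ r' '' Metric.closedBall w δ := by
    intro r'
    apply closure_minimal (Set.image_mono Metric.ball_subset_closedBall)
    exact ((isCompact_closedBall w δ).image (hρc r')).isClosed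
  have hclW2 : ∀ r' ∈ Set.Icc (-β) β, ∀ z ∈ closure (ρ r' '' W), dist z (c r') < κ := by
    intro r' hr' z hz
    obtain ⟨y, hy, rfl⟩ := hclW r' hz
    exact hflow r' (hIβ hr') y (Metric.mem_closedBall.mp hy)
  have hUinfav : ∀ r ∈ Set.Icc (-β) β, ∀ r' ∈ Set.Icc (-β) β, ∀ x ∈ Uinf, ∀ y : Y,
      dist y w ≤ δ → ρ r x ≠ ρ r' y := by
    intro r hr r' hr' x hx y hy heq
    have h0 : ρ (-r) (ρ r x) = ρ (-r) (ρ r' y) := by rw [heq]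
    rw [hinv] at h0
    rw [← hadd] at h0
    have hu : -r + r' ∈ Set.Icc (-(2*β)) (2*β) := by
      simp only [Set.mem_Icc] at hr hr' ⊢
      constructor <;> linarith [hr.1, hr.2, hr'.1, hr'.2]
    have hd : dist x (c (-r + r')) < κ := by rw [h0]; exact hflow _ hu y hy
    have hinf : Metric.infDist x A ≤ dist x (c (-r+r')) :=
      Metric.infDist_le_dist_of_mem (Set.mem_image_of_mem c hu)
    have hxU : rad/2 < Metric.infDist x A := hx
    linarith
  have hclWU : closure (⋃ r ∈ Set.Icc (-β) β, ρ r '' W) ⊆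
      (fun p : ℝ × Y => ρ p.1 p.2) '' (Set.Icc (-β) β ×ˢ Metric.closedBall w δ) := by
    apply closure_minimal
    · intro z hz
      simp only [Set.mem_iUnion, exists_prop] at hz
      obtain ⟨r, hr, y, hy, rfl⟩ := hz
      exact ⟨(r, y), ⟨hr, Metric.ball_subset_closedBall hy⟩, rfl⟩
    · exact ((isCompact_Icc.prod (isCompact_closedBall w δ)).image hcont).isClosed
  -- grid lemma
  have hgrid : ∀ u ∈ Set.Icc (-(2*β)) (2*β), ∃ i, i < N ∧ tt i ≤ u ∧ u ≤ tt (i+1) := by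
    intro u hu
    set q := (u + 2*β)/step with hqdef
    have hq0 : 0 ≤ q := by
      apply div_nonneg _ (le_of_lt hstep_pos)
      linarith [hu.1]
    have hqs : q * step = u + 2*β := by
      rw [hqdef]; field_simp
    have hqN : q ≤ (N:ℝ) := by
      rw [div_le_iff₀ hstep_pos]
      nlinarith [hu.2]
    refine ⟨min ⌊q⌋₊ (N-1), ?_, ?_, ?_⟩
    · have : min ⌊q⌋₊ (N-1) ≤ N - 1 := min_le_right _ _
      omega
    · simp only [httdef]
      have h1 : ((min ⌊q⌋₊ (N-1) : ℕ):ℝ) ≤ (⌊q⌋₊:ℝ) := by exact_mod_cast min_le_left _ _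
      have h2 : (⌊q⌋₊:ℝ) ≤ q := Nat.floor_le hq0
      nlinarith
    · simp only [httdef]
      by_cases hcase : ⌊q⌋₊ ≤ N - 1
      · rw [min_eq_left hcase]
        have h2 : q < (⌊q⌋₊:ℝ) + 1 := Nat.lt_floor_add_one q
        push_cast
        nlinarith
      · rw [min_eq_right (le_of_not_ge hcase)]
        have hN' : (N - 1) + 1 = N := by omega
        rw [hN']
        push_cast
        nlinarith
  -- adjacency of tubes
  have hadj : ∀ (y : Y) (i j : ℕ), i < N → j < N → y ∈ U i → y ∈ U j → i ≤ j → j ≤ i + 1 := by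
    intro y i j hiN hjN hyi hyj hij
    by_contra hc2
    push_neg at hc2
    simp only [hUdef, Set.mem_iUnion, Metric.mem_ball, exists_prop] at hyi hyj
    obtain ⟨s, hsK, hys⟩ := hyi
    obtain ⟨s', hs'K, hys'⟩ := hyj
    have hji : (i:ℝ) + 2 ≤ (j:ℝ) := by exact_mod_cast hc2
    have h1 : s ≤ tt (i+1) := hsK.2
    have h2 : tt j ≤ s' := hs'K.1
    have hsep : step ≤ |s - s'| := by
      simp only [httdef] at h1 h2
      push_cast at h1 h2
      rw [abs_sub_comm, abs_of_nonneg (by nlinarith)]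
      nlinarith
    have hGd := hG₂ s (hKI2 i hiN hsK) s' (hKI2 j hjN hs'K) hsep
    have htri : dist (c s) (c s') ≤ dist (c s) y + dist y (c s') := dist_triangle _ _ _
    rw [dist_comm] at hys
    linarith
  set V : Finset (Set Y) := insert Uinf ((Finset.range N).image U) with hVdef
  refine ⟨W, V, Metric.isOpen_ball, Metric.mem_ball_self hδpos, ?_, ?_, ?_, ?_, ?_⟩
  · -- openness
    intro s hs
    simp only [hVdef, Finset.mem_insert, Finset.mem_image, Finset.mem_range] at hs
    rcases hs with rfl | ⟨i, _, rfl⟩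
    · exact isOpen_lt continuous_const (Metric.continuous_infDist_pt A)
    · exact isOpen_biUnion fun s _ => Metric.isOpen_ball
  · -- cover
    intro y
    by_cases hy : rad/2 < Metric.infDist y A
    · exact ⟨Uinf, Finset.mem_insert_self _ _, hy⟩
    · push_neg at hy
      obtain ⟨z, hzA, hdz⟩ := hAcomp.exists_infDist_eq_dist hAne y
      obtain ⟨u, hu, rfl⟩ := hzA
      obtain ⟨i, hiN, hti, hti1⟩ := hgrid u hu
      refine ⟨U i, Finset.mem_insert_of_mem
        (Finset.mem_image_of_mem U (Finset.mem_range.mpr hiN)), ?_⟩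
      simp only [hUdef, Set.mem_iUnion, Metric.mem_ball, exists_prop]
      exact ⟨u, ⟨hti, hti1⟩, by rw [← hdz]; linarith⟩
  · -- order ≤ 3
    apply csSup_le'
    rintro n ⟨y, B, hBV, hBcard, hBy⟩
    by_cases hex : ∃ i, i < N ∧ y ∈ U i
    · have hi₀ := Nat.find_spec hex
      set i₀ := Nat.find hex with hi₀def
      have hsub : B ⊆ {Uinf, U i₀, U (i₀+1)} := by
        intro s hsB
        have hsV := hBV hsB
        have hys := hBy s hsB
        simp only [hVdef, Finset.mem_insert, Finset.mem_image, Finset.mem_range] at hsV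
        rcases hsV with rfl | ⟨j, hjN, rfl⟩
        · exact Finset.mem_insert_self _ _
        · have hj0 : i₀ ≤ j := le_of_not_gt (fun h => Nat.find_min hex h ⟨hjN, hys⟩)
          have hj1 : j ≤ i₀ + 1 := hadj y i₀ j hi₀.1 hjN hi₀.2 hys hj0
          have : j = i₀ ∨ j = i₀ + 1 := by omega
          rcases this with rfl | rfl
          · exact Finset.mem_insert_of_mem (Finset.mem_insert_self _ _)
          · exact Finset.mem_insert_of_mem (Finset.mem_insert_of_mem (Finset.mem_singleton_self _))
      have hcard := Finset.card_le_card hsub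
      have h3 : ({Uinf, U i₀, U (i₀+1)} : Finset (Set Y)).card ≤ 3 := by
        apply le_trans (Finset.card_insert_le _ _)
        have := Finset.card_insert_le (U i₀) ({U (i₀+1)} : Finset (Set Y))
        simp only [Finset.card_singleton] at this
        omega
      omega
    · push_neg at hex
      have hsub : B ⊆ {Uinf} := by
        intro s hsB
        have hsV := hBV hsB
        have hys := hBy s hsB
        simp only [hVdef, Finset.mem_insert, Finset.mem_image, Finset.mem_range] at hsV
        rcases hsV with rfl | ⟨j, hjN, rfl⟩
        · exact Finset.mem_singleton_self _
        · exact absurd hys (hex j hjN)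
      have hcard := Finset.card_le_card hsub
      simp only [Finset.card_singleton] at hcard
      omega
  · rintro s hsV r hr r₁ hr₁ r₂ hr₂ h12 ⟨⟨x₁, hx₁s, hx₁c⟩, ⟨x₂, hx₂s, hx₂c⟩⟩
    simp only [hVdef, Finset.mem_insert, Finset.mem_image, Finset.mem_range] at hsV
    rcases hsV with rfl | ⟨i, hiN, rfl⟩
    · obtain ⟨x, hx, rfl⟩ := hx₁s
      obtain ⟨y, hy, heq⟩ := hclW r₁ hx₁c
      exact hUinfav r hr r₁ hr₁ x hx y (Metric.mem_closedBall.mp hy) heq.symm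
    · have d1 : dist x₁ (c r₁) < κ := hclW2 r₁ hr₁ x₁ hx₁c
      have d2 : dist x₂ (c r₂) < κ := hclW2 r₂ hr₂ x₂ hx₂c
      obtain ⟨a, ha, rfl⟩ := hx₁s
      obtain ⟨b, hb, rfl⟩ := hx₂s
      have d3 : dist (ρ r a) (ρ r b) ≤ 3*(θ/8) := htube i hiN r (hIβ hr) a ha b hb
      have d4 : G₁ ≤ dist (c r₁) (c r₂) := hG₁ r₁ (hIβ hr₁) r₂ (hIβ hr₂) h12
      have d5 := dist_triangle4 (c r₁) (ρ r a) (ρ r b) (c r₂)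
      rw [dist_comm] at d1
      linarith
  · rintro s hsV ⟨z, hz1, hz2⟩ r hr
    simp only [hVdef, Finset.mem_insert, Finset.mem_image, Finset.mem_range] at hsV
    rcases hsV with rfl | ⟨i, hiN, rfl⟩
    · exfalso
      simp only [Set.mem_iUnion, exists_prop] at hz1
      obtain ⟨r₀, hr₀, x, hx, rfl⟩ := hz1
      obtain ⟨⟨r', y⟩, ⟨hr', hy⟩, heq⟩ := hclWU hz2
      exact hUinfav r₀ hr₀ r' hr' x hx y (Metric.mem_closedBall.mp hy) heq.symm
    · have hd : Metric.diam (ρ r '' (U i)) ≤ 3*(θ/8) := by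
        apply Metric.diam_le_of_forall_dist_le (by linarith)
        rintro x ⟨a, ha, rfl⟩ y ⟨b, hb, rfl⟩
        exact htube i hiN r (hIβ hr) a ha b hb
      have : 3*(θ/8) < α := by linarith
      linarith
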